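/- Let d, w₁, w₂, w₃ be odd positive integers, χ : ℤ → ℂ be d-periodic, ξ ∈ ℂ with appropriate nonvanishing conditions. Then for all n ≥ 0 and y₁, y₂ ∈ ℂ: w₃ⁿ ∑_{k=0}^{n} C(n,k) E_{k,χ,ξ^{w₂w₃}}(w₁y₁) ∑_{a=0}^{w₃d−1} (−1)^a χ(a) ξ^{a w₁ w₂} E_{n−k,χ,ξ^{w₁w₃}}(w₂y₂ + (w₂/w₃)a) w₁^{n−k} w₂^{k} is invariant under all six permutations of (w₁,w₂,w₃). In particular, w₃ⁿ ∑_k C(n,k) E_{k,χ,ξ^{w₂w₃}}(w₁y₁) ∑_{a<w₃d}(−1)^a χ(a) ξ^{aw₁w₂} E_{n−k,χ,ξ^{w₁w₃}}(w₂y₂ + (w₂/w₃)a) w₁^{n−k} w₂^k = w₁ⁿ ∑_k C(n,k) E_{k,χ,ξ^{w₁w₂}}(w₃y₁) ∑_{a<w₁d}(−1)^a χ(a) ξ^{aw₂w₃} E_{n−k,χ,ξ^{w₁w₃}}(w₂y₂ + (w₂/w₁)a) w₃^{n−k} w₂^k. -/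

import Mathlib

open Finset PowerSeries

/-- Generating function of the generalized twisted Euler polynomials:
`2 e^{xt} (ξ^d e^{dt}+1)⁻¹ ∑_{a=0}^{d-1} (-1)^a χ(a) ξ^a e^{at}` in `ℂ[[t]]`. -/
noncomputable def Egf (d : ℕ) (χ : ℤ → ℂ) (ξ x : ℂ) : PowerSeries ℂ :=
  2 * rescale x (exp ℂ) * (ξ ^ d • rescale (d : ℂ) (exp ℂ) + 1)⁻¹ *
    ∑ a ∈ Finset.range d, ((-1 : ℂ) ^ a * χ a * ξ ^ a) • rescale (a : ℂ) (exp ℂ)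

/-- The generalized twisted Euler polynomial `E_{n,χ,ξ}(x)`. -/
noncomputable def E (d : ℕ) (χ : ℤ → ℂ) (ξ x : ℂ) (n : ℕ) : ℂ :=
  (n.factorial : ℂ) * PowerSeries.coeff n (Egf d χ ξ x)

/-- The alternating generalized twisted power sum `T_k(m; χ, ξ)`. -/
noncomputable def T (m : ℕ) (χ : ℤ → ℂ) (ξ : ℂ) (k : ℕ) : ℂ :=
  ∑ a ∈ Finset.range (m + 1), (-1 : ℂ) ^ a * χ a * ξ ^ a * (a : ℂ) ^ k


/-- The expression of Theorem 3, as a function of `(w₁, w₂, w₃) = (u, v, w)`. -/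
noncomputable def S (d : ℕ) (χ : ℤ → ℂ) (ξ : ℂ) (n : ℕ) (y₁ y₂ : ℂ)
    (u v w : ℕ) : ℂ :=
  (w : ℂ) ^ n * ∑ k ∈ Finset.range (n + 1), (n.choose k : ℂ) *
    E d χ (ξ ^ (v * w)) ((u : ℂ) * y₁) k *
    (∑ a ∈ Finset.range (w * d), (-1 : ℂ) ^ a * χ a * ξ ^ (a * u * v) *
      E d χ (ξ ^ (u * w)) ((v : ℂ) * y₂ + (v : ℂ) / (w : ℂ) * (a : ℂ)) (n - k)) *
    (u : ℂ) ^ (n - k) * (v : ℂ) ^ k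

/-! ### Auxiliary development -/

/-- Abbreviation for the rescaled exponential `e^{ct}`. -/
noncomputable def ee (c : ℂ) : PowerSeries ℂ := rescale c (PowerSeries.exp ℂ)

lemma ee_mul (a b : ℂ) : ee a * ee b = ee (a + b) :=
  PowerSeries.exp_mul_exp_eq_exp_add a b

lemma ee_zero : ee 0 = 1 := by
  ext n
  rcases n with _ | n <;>
    simp [ee, PowerSeries.coeff_rescale, PowerSeries.coeff_one, PowerSeries.coeff_exp]

lemma ee_pow (m : ℕ) (c : ℂ) : (ee c) ^ m = ee (m * c) := by
  induction m with
  | zero => simp [ee_zero]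
  | succ k ih => rw [pow_succ, ih, ee_mul]; push_cast; ring_nf

lemma constCoeff_ee (c : ℂ) : PowerSeries.constantCoeff (ee c) = 1 := by
  simp [ee, ← PowerSeries.coeff_zero_eq_constantCoeff, PowerSeries.coeff_rescale,
    PowerSeries.coeff_exp]

lemma rescale_ee (c x : ℂ) : rescale c (ee x) = ee (x * c) := by
  rw [ee, ee, PowerSeries.rescale_rescale]

lemma rescale_smul (c r : ℂ) (f : PowerSeries ℂ) :
    rescale c (r • f) = r • rescale c f := by
  ext n
  simp [PowerSeries.coeff_rescale]
  ring

lemma rescale_inv (c : ℂ) (f : PowerSeries ℂ) (h : PowerSeries.constantCoeff f ≠ 0) :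
    rescale c f⁻¹ = (rescale c f)⁻¹ := by
  have hc : PowerSeries.constantCoeff (rescale c f) ≠ 0 := by
    rwa [← PowerSeries.coeff_zero_eq_constantCoeff, PowerSeries.coeff_rescale, pow_zero, one_mul,
      PowerSeries.coeff_zero_eq_constantCoeff]
  rw [PowerSeries.eq_inv_iff_mul_eq_one hc, ← map_mul, PowerSeries.inv_mul_cancel _ h, map_one]

/-- `ξ^q e^{qt} + 1`. -/
noncomputable def Dser (ξ : ℂ) (q : ℕ) : PowerSeries ℂ := ξ ^ q • ee (q : ℂ) + 1

lemma constCoeff_Dser (ξ : ℂ) (q : ℕ) :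
    PowerSeries.constantCoeff (Dser ξ q) = ξ ^ q + 1 := by
  simp [Dser, constCoeff_ee]

/-- `∑_{a<d} (-1)^a χ(a) ξ^{pa} e^{pat}`. -/
noncomputable def Aser (d : ℕ) (χ : ℤ → ℂ) (ξ : ℂ) (p : ℕ) : PowerSeries ℂ :=
  ∑ a ∈ Finset.range d, ((-1 : ℂ) ^ a * χ a * ξ ^ (p * a)) • ee ((p * a : ℕ) : ℂ)

/-- `∑_{a<m·d} (-1)^a χ(a) ξ^{pa} e^{pat}`. -/
noncomputable def Bser (d : ℕ) (χ : ℤ → ℂ) (ξ : ℂ) (p m : ℕ) : PowerSeries ℂ :=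
  ∑ a ∈ Finset.range (m * d), ((-1 : ℂ) ^ a * χ a * ξ ^ (p * a)) • ee ((p * a : ℕ) : ℂ)

lemma rescale_Egf (d : ℕ) (χ : ℤ → ℂ) (ξ : ℂ) (p : ℕ) (x : ℂ)
    (hp : ξ ^ (p * d) + 1 ≠ 0) :
    rescale ((p : ℕ) : ℂ) (Egf d χ (ξ ^ p) x) =
      2 * ee (x * p) * (Dser ξ (p * d))⁻¹ * Aser d χ ξ p := by
  have hD : PowerSeries.constantCoeff ((ξ ^ p) ^ d • rescale (d : ℂ) (exp ℂ) + 1) ≠ 0 := by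
    have : PowerSeries.constantCoeff ((ξ ^ p) ^ d • rescale (d : ℂ) (exp ℂ) + 1)
        = ξ ^ (p * d) + 1 := by
      have := constCoeff_ee (d : ℂ)
      simp only [ee] at this
      simp [this, ← pow_mul]
    rw [this]; exact hp
  rw [Egf, map_mul, map_mul, map_mul, map_ofNat, rescale_inv _ _ hD, map_sum]
  congr 2
  · congr 1
    exact rescale_ee _ _
  · congr 1
    rw [map_add, map_one, rescale_smul, Dser, ← pow_mul]
    congr 2
    · show rescale _ (ee _) = _
      rw [rescale_ee]; push_cast; ring_nf
  · funext a
    rw [rescale_smul, ← pow_mul]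
    congr 1
    show rescale _ (ee _) = _
    rw [rescale_ee]; push_cast; ring_nf

lemma Bser_eq (d : ℕ) (hd : Odd d) (χ : ℤ → ℂ) (hχ : Function.Periodic χ (d : ℤ)) (ξ : ℂ)
    (p m : ℕ) :
    Bser d χ ξ p m = Aser d χ ξ p *
      ∑ j ∈ Finset.range m, (-(ξ ^ (p * d) • ee ((p * d : ℕ) : ℂ))) ^ j := by
  have hreq : ∀ q : ℕ, -(ξ ^ q • ee ((q : ℕ) : ℂ)) = (-(ξ ^ q)) • ee ((q : ℕ) : ℂ) := by
    intro q; rw [neg_smul]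
  rw [hreq]
  set r : PowerSeries ℂ := (-(ξ ^ (p * d))) • ee ((p * d : ℕ) : ℂ) with hr
  induction m with
  | zero => simp [Bser]
  | succ k ih =>
    have hmul : (k + 1) * d = k * d + d := by ring
    rw [Bser, hmul, Finset.sum_range_add, ← Bser, ih, Finset.sum_range_succ, mul_add]
    congr 1
    have hrk : r ^ k = ((-1 : ℂ) ^ k * ξ ^ (p * d * k)) • ee ((p * d * k : ℕ) : ℂ) := by
      rw [hr, smul_pow, ee_pow]
      congr 1
      · rw [neg_pow, ← pow_mul]
      · push_cast; ring
    rw [Aser, Finset.sum_mul]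
    apply Finset.sum_congr rfl
    intro b _
    rw [hrk, smul_mul_smul_comm, ee_mul]
    have h1 : ((-1 : ℂ) ^ (k * d + b)) = (-1 : ℂ) ^ b * (-1 : ℂ) ^ k := by
      rw [pow_add, mul_comm k d, pow_mul, hd.neg_one_pow]
      ring
    have h2 : χ ((k * d + b : ℕ) : ℤ) = χ (b : ℤ) := by
      have := (hχ.nat_mul k) (b : ℤ)
      push_cast at this ⊢
      rw [← this]
      ring_nf
    have h3 : ((p * (k * d + b) : ℕ) : ℂ) = ((p * b : ℕ) : ℂ) + ((p * d * k : ℕ) : ℂ) := by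
      push_cast; ring
    rw [h1, h2, h3]
    congr 1
    rw [← pow_add]
    ring_nf

lemma geom_Dser (ξ : ℂ) (q m : ℕ) (hm : Odd m) :
    (∑ j ∈ Finset.range m, (-(ξ ^ q • ee ((q : ℕ) : ℂ))) ^ j) * Dser ξ q
      = Dser ξ (q * m) := by
  have h := geom_sum_mul (-(ξ ^ q • ee ((q : ℕ) : ℂ))) m
  have hxm : (-(ξ ^ q • ee ((q : ℕ) : ℂ))) ^ m = -(ξ ^ (q * m) • ee ((q * m : ℕ) : ℂ)) := by
    rw [hm.neg_pow, smul_pow, ee_pow, pow_mul]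
    congr 2
    push_cast; ring
  rw [hxm] at h
  simp only [Dser, PowerSeries.smul_eq_C_mul] at h ⊢
  linear_combination -h

/-- Product of `Bser` with the inverse relation. -/
lemma Bser_formula (d : ℕ) (hd : Odd d) (χ : ℤ → ℂ) (hχ : Function.Periodic χ (d : ℤ)) (ξ : ℂ)
    (p m : ℕ) (hm : Odd m) (hp : ξ ^ (p * d) + 1 ≠ 0) :
    Bser d χ ξ p m = Aser d χ ξ p * Dser ξ (p * d * m) * (Dser ξ (p * d))⁻¹ := by
  have hD : PowerSeries.constantCoeff (Dser ξ (p * d)) ≠ 0 := by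
    rw [constCoeff_Dser]; exact hp
  rw [Bser_eq d hd χ hχ ξ p m]
  have hg := geom_Dser ξ (p * d) m hm
  have : (∑ j ∈ Finset.range m, (-(ξ ^ (p * d) • ee ((p * d : ℕ) : ℂ))) ^ j)
      = Dser ξ (p * d * m) * (Dser ξ (p * d))⁻¹ := by
    rw [← hg, mul_assoc, PowerSeries.mul_inv_cancel _ hD, mul_one]
  rw [this, ← mul_assoc]

/-- The manifestly symmetric power series. -/
noncomputable def SymSer (d : ℕ) (χ : ℤ → ℂ) (ξ : ℂ) (y₁ y₂ : ℂ) (u v w : ℕ) : PowerSeries ℂ :=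
  (4 : PowerSeries ℂ) * ee (((u * v * w : ℕ) : ℂ) * y₁) * ee (((u * v * w : ℕ) : ℂ) * y₂) *
    Dser ξ (u * v * w * d) *
    (Dser ξ (u * v * d))⁻¹ * Aser d χ ξ (u * v) *
    (Dser ξ (u * w * d))⁻¹ * Aser d χ ξ (u * w) *
    (Dser ξ (v * w * d))⁻¹ * Aser d χ ξ (v * w)

lemma SymSer_comm12 (d : ℕ) (χ : ℤ → ℂ) (ξ : ℂ) (y₁ y₂ : ℂ) (u v w : ℕ) :
    SymSer d χ ξ y₁ y₂ u v w = SymSer d χ ξ y₁ y₂ v u w := by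
  unfold SymSer
  rw [show v * u = u * v from mul_comm v u]
  set a := (Dser ξ (u * v * d))⁻¹
  set b := (Dser ξ (u * w * d))⁻¹
  set c := (Dser ξ (v * w * d))⁻¹
  ring

lemma SymSer_comm23 (d : ℕ) (χ : ℤ → ℂ) (ξ : ℂ) (y₁ y₂ : ℂ) (u v w : ℕ) :
    SymSer d χ ξ y₁ y₂ u v w = SymSer d χ ξ y₁ y₂ u w v := by
  unfold SymSer
  rw [show u * w * v = u * v * w by ring, show w * v = v * w from mul_comm w v]
  set a := (Dser ξ (u * v * d))⁻¹
  set b := (Dser ξ (u * w * d))⁻¹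
  set c := (Dser ξ (v * w * d))⁻¹
  ring

/-- `S` as `n!` times a power-series coefficient. -/
lemma S_eq (d : ℕ) (χ : ℤ → ℂ) (ξ : ℂ) (n : ℕ) (y₁ y₂ : ℂ) (u v w : ℕ) :
    S d χ ξ n y₁ y₂ u v w = (n.factorial : ℂ) * PowerSeries.coeff n
      (rescale ((v * w : ℕ) : ℂ) (Egf d χ (ξ ^ (v * w)) ((u : ℂ) * y₁)) *
       ∑ a ∈ Finset.range (w * d), ((-1 : ℂ) ^ a * χ a * ξ ^ (a * u * v)) •
         rescale ((u * w : ℕ) : ℂ)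
           (Egf d χ (ξ ^ (u * w)) ((v : ℂ) * y₂ + (v : ℂ) / (w : ℂ) * (a : ℂ)))) := by
  rw [PowerSeries.coeff_mul, Finset.Nat.sum_antidiagonal_eq_sum_range_succ_mk, S,
    Finset.mul_sum, Finset.mul_sum]
  apply Finset.sum_congr rfl
  intro k hk
  have hk' : k ≤ n := by simp only [Finset.mem_range] at hk; omega
  have hfac : ((n.choose k : ℕ) : ℂ) * (k.factorial : ℂ) * ((n - k).factorial : ℂ)
      = (n.factorial : ℂ) := by
    exact_mod_cast congrArg (Nat.cast (R := ℂ))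
      (Nat.choose_mul_factorial_mul_factorial hk')
  simp only [E, map_sum, PowerSeries.coeff_smul, PowerSeries.coeff_rescale, smul_eq_mul]
  set ck := PowerSeries.coeff k (Egf d χ (ξ ^ (v * w)) ((u : ℂ) * y₁)) with hck
  set ea := fun a : ℕ => PowerSeries.coeff (n - k)
    (Egf d χ (ξ ^ (u * w)) ((v : ℂ) * y₂ + (v : ℂ) / (w : ℂ) * (a : ℂ))) with hea
  have hL : (∑ a ∈ Finset.range (w * d), (-1 : ℂ) ^ a * χ a * ξ ^ (a * u * v) *
        (((n - k).factorial : ℂ) * ea a))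
      = ((n - k).factorial : ℂ) *
        ∑ a ∈ Finset.range (w * d), (-1 : ℂ) ^ a * χ a * ξ ^ (a * u * v) * ea a := by
    rw [Finset.mul_sum]; exact Finset.sum_congr rfl fun a _ => by ring
  have hR : (∑ a ∈ Finset.range (w * d), (-1 : ℂ) ^ a * χ a * ξ ^ (a * u * v) *
        (((u * w : ℕ) : ℂ) ^ (n - k) * ea a))
      = ((u * w : ℕ) : ℂ) ^ (n - k) *
        ∑ a ∈ Finset.range (w * d), (-1 : ℂ) ^ a * χ a * ξ ^ (a * u * v) * ea a := by
    rw [Finset.mul_sum]; exact Finset.sum_congr rfl fun a _ => by ring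
  rw [hL, hR]
  set Sa := ∑ a ∈ Finset.range (w * d), (-1 : ℂ) ^ a * χ a * ξ ^ (a * u * v) * ea a with hSa
  rw [← hfac, show (w : ℂ) ^ n = (w : ℂ) ^ k * (w : ℂ) ^ (n - k) by
    rw [← pow_add]; congr 1; omega]
  push_cast
  ring

lemma S_eq_sym (d : ℕ) (hd : Odd d) (χ : ℤ → ℂ) (hχ : Function.Periodic χ (d : ℤ)) (ξ : ℂ)
    (u v w : ℕ) (hw0 : 0 < w) (hwo : Odd w)
    (huv : ξ ^ (u * v * d) + 1 ≠ 0) (huw : ξ ^ (u * w * d) + 1 ≠ 0)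
    (hvw : ξ ^ (v * w * d) + 1 ≠ 0)
    (n : ℕ) (y₁ y₂ : ℂ) :
    S d χ ξ n y₁ y₂ u v w = (n.factorial : ℂ) *
      PowerSeries.coeff n (SymSer d χ ξ y₁ y₂ u v w) := by
  have hcw : (w : ℂ) ≠ 0 := Nat.cast_ne_zero.mpr hw0.ne'
  have hG : (∑ a ∈ Finset.range (w * d), ((-1 : ℂ) ^ a * χ a * ξ ^ (a * u * v)) •
        rescale ((u * w : ℕ) : ℂ)
          (Egf d χ (ξ ^ (u * w)) ((v : ℂ) * y₂ + (v : ℂ) / (w : ℂ) * (a : ℂ))))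
      = 2 * ee (((u * v * w : ℕ) : ℂ) * y₂) * (Dser ξ (u * w * d))⁻¹ * Aser d χ ξ (u * w) *
        Bser d χ ξ (u * v) w := by
    rw [Bser, Finset.mul_sum]
    apply Finset.sum_congr rfl
    intro a ha
    rw [rescale_Egf d χ ξ (u * w) _ huw]
    have harg : ((v : ℂ) * y₂ + (v : ℂ) / (w : ℂ) * (a : ℂ)) * ((u * w : ℕ) : ℂ)
        = ((u * v * w : ℕ) : ℂ) * y₂ + ((u * v * a : ℕ) : ℂ) := by
      push_cast; field_simp
    rw [harg, ← ee_mul, show a * u * v = u * v * a by ring]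
    simp only [PowerSeries.smul_eq_C_mul]
    ring
  have hP : rescale ((v * w : ℕ) : ℂ) (Egf d χ (ξ ^ (v * w)) ((u : ℂ) * y₁)) *
        (∑ a ∈ Finset.range (w * d), ((-1 : ℂ) ^ a * χ a * ξ ^ (a * u * v)) •
          rescale ((u * w : ℕ) : ℂ)
            (Egf d χ (ξ ^ (u * w)) ((v : ℂ) * y₂ + (v : ℂ) / (w : ℂ) * (a : ℂ))))
      = SymSer d χ ξ y₁ y₂ u v w := by
    rw [hG, rescale_Egf d χ ξ (v * w) ((u : ℂ) * y₁) hvw,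
      Bser_formula d hd χ hχ ξ (u * v) w hwo huv]
    have he1 : ee ((u : ℂ) * y₁ * ((v * w : ℕ) : ℂ)) = ee (((u * v * w : ℕ) : ℂ) * y₁) := by
      congr 1; push_cast; ring
    rw [he1, SymSer, show u * v * d * w = u * v * w * d by ring]
    set a1 := (Dser ξ (u * v * d))⁻¹
    set a2 := (Dser ξ (u * w * d))⁻¹
    set a3 := (Dser ξ (v * w * d))⁻¹
    ring
  rw [S_eq, hP]

set_option maxHeartbeats 1000000 in
/-- Theorem 3: the expression is invariant under all six permutations of `(w₁,w₂,w₃)`. -/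
theorem theorem3 (d : ℕ) (hd : Odd d) (hd0 : 0 < d)
    (χ : ℤ → ℂ) (hχ : Function.Periodic χ (d : ℤ)) (ξ : ℂ)
    (w : Fin 3 → ℕ) (hw : ∀ i, 0 < w i) (hwodd : ∀ i, Odd (w i))
    (hξ : ∀ i j, i ≠ j → ξ ^ (d * w i * w j) + 1 ≠ 0)
    (n : ℕ) (y₁ y₂ : ℂ) (σ : Equiv.Perm (Fin 3)) :
    S d χ ξ n y₁ y₂ (w (σ 0)) (w (σ 1)) (w (σ 2)) =
      S d χ ξ n y₁ y₂ (w 0) (w 1) (w 2) := by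
  have hξ' : ∀ i j : Fin 3, i ≠ j → ξ ^ (w i * w j * d) + 1 ≠ 0 := by
    intro i j hij
    have := hξ i j hij
    rwa [show d * w i * w j = w i * w j * d by ring] at this
  have key : ∀ i j k : Fin 3, i ≠ j → i ≠ k → j ≠ k →
      S d χ ξ n y₁ y₂ (w i) (w j) (w k)
        = (n.factorial : ℂ) * PowerSeries.coeff n (SymSer d χ ξ y₁ y₂ (w i) (w j) (w k)) :=
    fun i j k hij hik hjk => S_eq_sym d hd χ hχ ξ (w i) (w j) (w k) (hw k) (hwodd k)
      (hξ' i j hij) (hξ' i k hik) (hξ' j k hjk) n y₁ y₂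
  have c12 := fun a b c => SymSer_comm12 d χ ξ y₁ y₂ a b c
  have c23 := fun a b c => SymSer_comm23 d χ ξ y₁ y₂ a b c
  have e021 : SymSer d χ ξ y₁ y₂ (w 0) (w 2) (w 1) = SymSer d χ ξ y₁ y₂ (w 0) (w 1) (w 2) :=
    (c23 (w 0) (w 1) (w 2)).symm
  have e102 : SymSer d χ ξ y₁ y₂ (w 1) (w 0) (w 2) = SymSer d χ ξ y₁ y₂ (w 0) (w 1) (w 2) :=
    (c12 (w 0) (w 1) (w 2)).symm
  have e120 : SymSer d χ ξ y₁ y₂ (w 1) (w 2) (w 0) = SymSer d χ ξ y₁ y₂ (w 0) (w 1) (w 2) :=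
    (c23 (w 1) (w 2) (w 0)).trans e102
  have e201 : SymSer d χ ξ y₁ y₂ (w 2) (w 0) (w 1) = SymSer d χ ξ y₁ y₂ (w 0) (w 1) (w 2) :=
    (c12 (w 2) (w 0) (w 1)).trans e021
  have e210 : SymSer d χ ξ y₁ y₂ (w 2) (w 1) (w 0) = SymSer d χ ξ y₁ y₂ (w 0) (w 1) (w 2) :=
    (c12 (w 2) (w 1) (w 0)).trans e120
  have hmem : ∀ x : Fin 3, x = 0 ∨ x = 1 ∨ x = 2 := by decide
  have i0 : σ 0 ≠ σ 1 := σ.injective.ne (by decide)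
  have i1 : σ 0 ≠ σ 2 := σ.injective.ne (by decide)
  have i2 : σ 1 ≠ σ 2 := σ.injective.ne (by decide)
  rcases hmem (σ 0) with h0 | h0 | h0 <;> rcases hmem (σ 1) with h1 | h1 | h1 <;>
    rcases hmem (σ 2) with h2 | h2 | h2 <;>
    first
    | exact absurd (h0.trans h1.symm) i0
    | exact absurd (h0.trans h2.symm) i1
    | exact absurd (h1.trans h2.symm) i2
    | (rw [h0, h1, h2, key _ _ _ (by decide) (by decide) (by decide)]
       try rw [key 0 1 2 (by decide) (by decide) (by decide)]
       try (first | rw [e021] | rw [e102] | rw [e120] | rw [e201] | rw [e210]))
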